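/- If X ∼ Gamma(a, 1) and Y ∼ Gamma(b, 1) are independent, then X/(X+Y) follows a Beta(a, b) distribution and is independent of X+Y, which follows Gamma(a+b, 1). -/

import Mathlib

open MeasureTheory ProbabilityTheory

/-- The density of the Beta distribution with parameters `a, b` on `[0,1]`:
`t^(a-1) (1-t)^(b-1) / B(a,b)` where `B(a,b) = Γ(a) Γ(b) / Γ(a+b)`. -/
noncomputable def betaPDFReal' (a b : ℝ) (t : ℝ) : ℝ :=
  if 0 < t ∧ t < 1 then
    (Real.Gamma (a + b) / (Real.Gamma a * Real.Gamma b))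
      * t ^ (a - 1) * (1 - t) ^ (b - 1)
  else 0

/-- The Beta distribution with parameters `a, b` as a measure on `ℝ`. -/
noncomputable def betaMeasure' (a b : ℝ) : Measure ℝ :=
  volume.withDensity (fun t => ENNReal.ofReal (betaPDFReal' a b t))

namespace GammaRatioBetaAux

open Set Real
open scoped ENNReal

noncomputable def Tmap : ℝ × ℝ → ℝ × ℝ := fun p => (p.1 / (p.1 + p.2), p.1 + p.2)
noncomputable def Tinv : ℝ × ℝ → ℝ × ℝ := fun p => (p.1 * p.2, (1 - p.1) * p.2)

def S : Set (ℝ × ℝ) := Ioi 0 ×ˢ Ioi 0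
def U : Set (ℝ × ℝ) := Ioo (0:ℝ) 1 ×ˢ Ioi 0

lemma measurable_Tmap : Measurable Tmap :=
  (measurable_fst.div (measurable_fst.add measurable_snd)).prodMk
    (measurable_fst.add measurable_snd)

lemma measurableSet_U : MeasurableSet U := measurableSet_Ioo.prod measurableSet_Ioi

lemma measurableSet_S : MeasurableSet S := measurableSet_Ioi.prod measurableSet_Ioi

lemma Tmap_Tinv {p : ℝ × ℝ} (hp : p ∈ U) : Tmap (Tinv p) = p := by
  obtain ⟨⟨hu0, hu1⟩, hs⟩ := hp
  have hs' : (0:ℝ) < p.2 := hs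
  have hsum : p.1 * p.2 + (1 - p.1) * p.2 = p.2 := by ring
  simp only [Tmap, Tinv, hsum]
  have h2 : p.1 * p.2 / p.2 = p.1 := by field_simp
  rw [h2]

lemma image_Tinv : Tinv '' U = S := by
  ext q
  constructor
  · rintro ⟨p, ⟨⟨hu0, hu1⟩, hs⟩, rfl⟩
    exact ⟨mul_pos hu0 hs, mul_pos (by linarith : (0:ℝ) < 1 - p.1) hs⟩
  · rintro ⟨hx, hy⟩
    have hx' : (0:ℝ) < q.1 := hx
    have hy' : (0:ℝ) < q.2 := hy
    have hsum : 0 < q.1 + q.2 := by linarith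
    refine ⟨(q.1 / (q.1 + q.2), q.1 + q.2), ⟨⟨div_pos hx' hsum, ?_⟩, hsum⟩, ?_⟩
    · rw [div_lt_one hsum]; linarith
    · have h1 : q.1 / (q.1 + q.2) * (q.1 + q.2) = q.1 := by field_simp
      have h2 : (1 - q.1 / (q.1 + q.2)) * (q.1 + q.2) = q.2 := by field_simp; ring
      simp only [Tinv, h1, h2]

lemma injOn_Tinv : InjOn Tinv U := by
  rintro p hp q hq h
  have h1 : p.1 * p.2 = q.1 * q.2 := congrArg Prod.fst h
  have h2 : (1 - p.1) * p.2 = (1 - q.1) * q.2 := congrArg Prod.snd h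
  have hs : p.2 = q.2 := by linarith [h1, h2]
  have hq2 : (0:ℝ) < q.2 := hq.2
  have hu : p.1 = q.1 := by
    rw [hs] at h1
    exact mul_right_cancel₀ hq2.ne' h1
  exact Prod.ext hu hs

noncomputable def D (p : ℝ × ℝ) : ℝ × ℝ →L[ℝ] ℝ × ℝ :=
  ((p.1 • ContinuousLinearMap.snd ℝ ℝ ℝ + p.2 • ContinuousLinearMap.fst ℝ ℝ ℝ)).prod
    ((1 - p.1) • ContinuousLinearMap.snd ℝ ℝ ℝ +
      p.2 • ((0 : ℝ × ℝ →L[ℝ] ℝ) - ContinuousLinearMap.fst ℝ ℝ ℝ))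

lemma hasFDerivAt_Tinv (p : ℝ × ℝ) : HasFDerivAt Tinv (D p) p :=
  (hasFDerivAt_fst.mul hasFDerivAt_snd).prodMk
    (((hasFDerivAt_const (1:ℝ) p).sub hasFDerivAt_fst).mul hasFDerivAt_snd)

lemma det_D (p : ℝ × ℝ) : (D p).det = p.2 := by
  have h : (D p).det = LinearMap.det ((D p) : ℝ × ℝ →ₗ[ℝ] ℝ × ℝ) := rfl
  rw [h, ← LinearMap.det_toMatrix (Module.Basis.finTwoProd ℝ), Matrix.det_fin_two]
  simp [LinearMap.toMatrix_apply, Module.Basis.finTwoProd_zero, Module.Basis.finTwoProd_one, D]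
  ring

lemma measurable_betaPDFReal (a b : ℝ) : Measurable (betaPDFReal' a b) := by
  unfold betaPDFReal'
  refine Measurable.ite ?_ ?_ measurable_const
  · exact (measurableSet_lt measurable_const measurable_id).inter
      (measurableSet_lt measurable_id measurable_const)
  · fun_prop

lemma betaPDFReal_nonneg {a b : ℝ} (ha : 0 < a) (hb : 0 < b) (u : ℝ) :
    0 ≤ betaPDFReal' a b u := by
  unfold betaPDFReal'
  split_ifs with hmem
  · obtain ⟨h0, h1⟩ := hmem
    have hga := Real.Gamma_pos_of_pos ha
    have hgb := Real.Gamma_pos_of_pos hb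
    have hgab := Real.Gamma_pos_of_pos (show (0:ℝ) < a + b by linarith)
    have h1u : (0:ℝ) < 1 - u := by linarith
    positivity
  · exact le_refl 0

lemma density_eq {a b : ℝ} (ha : 0 < a) (hb : 0 < b) {p : ℝ × ℝ}
    (hu0 : 0 < p.1) (hu1 : p.1 < 1) (hs : 0 < p.2) :
    ENNReal.ofReal |p.2| *
        (gammaPDF a 1 (p.1 * p.2) * gammaPDF b 1 ((1 - p.1) * p.2)) =
      ENNReal.ofReal (betaPDFReal' a b p.1) * gammaPDF (a + b) 1 p.2 := by
  set u := p.1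
  set s := p.2
  have h1u : (0:ℝ) < 1 - u := by linarith
  rw [gammaPDF_of_nonneg (by positivity), gammaPDF_of_nonneg (by positivity),
    gammaPDF_of_nonneg hs.le, abs_of_pos hs]
  have hbeta : 0 ≤ betaPDFReal' a b u := betaPDFReal_nonneg ha hb u
  rw [← ENNReal.ofReal_mul (by positivity), ← ENNReal.ofReal_mul (by positivity),
    ← ENNReal.ofReal_mul hbeta]
  congr 1
  unfold betaPDFReal'
  rw [if_pos ⟨hu0, hu1⟩]
  have hΓa : Real.Gamma a ≠ 0 := (Real.Gamma_pos_of_pos ha).ne'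
  have hΓb : Real.Gamma b ≠ 0 := (Real.Gamma_pos_of_pos hb).ne'
  have hΓab : Real.Gamma (a + b) ≠ 0 := (Real.Gamma_pos_of_pos (by linarith)).ne'
  have hexp : Real.exp (-(u * s)) * Real.exp (-((1 - u) * s))
      = Real.exp (-s) := by
    rw [← Real.exp_add]; congr 1; ring
  have hrpow : s ^ (a - 1) * s ^ (b - 1) * s = s ^ (a + b - 1) := by
    rw [← Real.rpow_add hs, ← Real.rpow_add_one hs.ne']
    congr 1; ring
  rw [Real.one_rpow, Real.one_rpow, Real.one_rpow,
    Real.mul_rpow hu0.le hs.le, Real.mul_rpow h1u.le hs.le]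
  field_simp
  have e1 : Real.exp (-(s * u)) * Real.exp (-(s * (1 - u))) = Real.exp (-s) := by
    rw [← Real.exp_add]; congr 1; ring
  linear_combination (s ^ (a - 1) * s ^ (b - 1) * s) * e1 + Real.exp (-s) * hrpow

lemma prod_withDensity {f g : ℝ → ℝ≥0∞} [SigmaFinite (volume.withDensity f)]
    [SigmaFinite (volume.withDensity g)] (hf : Measurable f) (hg : Measurable g) :
    (volume.withDensity f).prod (volume.withDensity g)
      = (volume : Measure (ℝ × ℝ)).withDensity (fun p => f p.1 * g p.2) := by
  refine Measure.prod_eq fun s t hs ht => ?_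
  rw [withDensity_apply _ (hs.prod ht), Measure.volume_eq_prod, ← Measure.prod_restrict,
    lintegral_prod_mul hf.aemeasurable hg.aemeasurable,
    withDensity_apply _ hs, withDensity_apply _ ht]

lemma map_Tmap {a b : ℝ} (ha : 0 < a) (hb : 0 < b) :
    Measure.map Tmap
        ((volume : Measure (ℝ × ℝ)).withDensity fun p => gammaPDF a 1 p.1 * gammaPDF b 1 p.2)
      = (volume : Measure (ℝ × ℝ)).withDensity
          fun p => ENNReal.ofReal (betaPDFReal' a b p.1) * gammaPDF (a + b) 1 p.2 := by
  ext A hA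
  rw [Measure.map_apply measurable_Tmap hA, withDensity_apply _ (measurable_Tmap hA),
    withDensity_apply _ hA]
  have hN : volume ({p : ℝ × ℝ | p.1 = 0} ∪ {p : ℝ × ℝ | p.2 = 0}) = 0 := by
    apply measure_union_null
    · have h : {p : ℝ × ℝ | p.1 = 0} = ({0} : Set ℝ) ×ˢ (univ : Set ℝ) := by
        ext p
        simp only [Set.mem_setOf_eq, Set.mem_prod, Set.mem_singleton_iff, Set.mem_univ, and_true]
      rw [h, Measure.volume_eq_prod, Measure.prod_prod]
      simp
    · have h : {p : ℝ × ℝ | p.2 = 0} = (univ : Set ℝ) ×ˢ ({0} : Set ℝ) := by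
        ext p
        simp only [Set.mem_setOf_eq, Set.mem_prod, Set.mem_singleton_iff, Set.mem_univ, and_true, true_and]
      rw [h, Measure.volume_eq_prod, Measure.prod_prod]
      simp
  have step1 : ∫⁻ p in Tmap ⁻¹' A, gammaPDF a 1 p.1 * gammaPDF b 1 p.2
      = ∫⁻ p in (Tmap ⁻¹' A) ∩ S, gammaPDF a 1 p.1 * gammaPDF b 1 p.2 := by
    rw [← lintegral_indicator (measurable_Tmap hA) _,
      ← lintegral_indicator ((measurable_Tmap hA).inter measurableSet_S) _]
    apply lintegral_congr_ae
    filter_upwards [measure_eq_zero_iff_ae_notMem.mp hN] with p hp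
    have hp1 : p.1 ≠ 0 := fun h => hp (Or.inl h)
    have hp2 : p.2 ≠ 0 := fun h => hp (Or.inr h)
    by_cases h1 : p ∈ Tmap ⁻¹' A
    · by_cases h2 : p ∈ S
      · rw [Set.indicator_of_mem h1, Set.indicator_of_mem (Set.mem_inter h1 h2)]
      · rw [Set.indicator_of_mem h1, Set.indicator_of_notMem (fun hc => h2 hc.2)]
        have h3 : p.1 < 0 ∨ p.2 < 0 := by
          simp only [S, Set.mem_prod, Set.mem_Ioi, not_and_or, not_lt] at h2
          rcases h2 with h | h
          · exact Or.inl (lt_of_le_of_ne h hp1)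
          · exact Or.inr (lt_of_le_of_ne h hp2)
        rcases h3 with h | h
        · rw [gammaPDF_of_neg h, zero_mul]
        · rw [gammaPDF_of_neg h, mul_zero]
    · rw [Set.indicator_of_notMem h1, Set.indicator_of_notMem (fun hc => h1 hc.1)]
  have step2 : ∫⁻ p in A, ENNReal.ofReal (betaPDFReal' a b p.1) * gammaPDF (a + b) 1 p.2
      = ∫⁻ p in A ∩ U, ENNReal.ofReal (betaPDFReal' a b p.1) * gammaPDF (a + b) 1 p.2 := by
    rw [← lintegral_indicator hA _, ← lintegral_indicator (hA.inter measurableSet_U) _]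
    apply lintegral_congr_ae
    filter_upwards [measure_eq_zero_iff_ae_notMem.mp hN] with p hp
    have hp2 : p.2 ≠ 0 := fun h => hp (Or.inr h)
    by_cases h1 : p ∈ A
    · by_cases h2 : p ∈ U
      · rw [Set.indicator_of_mem h1, Set.indicator_of_mem (Set.mem_inter h1 h2)]
      · rw [Set.indicator_of_mem h1, Set.indicator_of_notMem (fun hc => h2 hc.2)]
        by_cases h3 : 0 < p.1 ∧ p.1 < 1
        · have h4 : p.2 < 0 := by
            simp only [U, Set.mem_prod, Set.mem_Ioo, Set.mem_Ioi, not_and_or, not_lt] at h2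
            rcases h2 with h | h
            · rcases h with h | h
              · exact absurd h3.1 (not_lt.mpr h)
              · exact absurd h3.2 (not_lt.mpr h)
            · exact lt_of_le_of_ne h hp2
          rw [gammaPDF_of_neg h4, mul_zero]
        · have h5 : betaPDFReal' a b p.1 = 0 := by unfold betaPDFReal'; rw [if_neg h3]
          rw [h5]; simp
    · rw [Set.indicator_of_notMem h1, Set.indicator_of_notMem (fun hc => h1 hc.1)]
  rw [step1, step2]
  -- change of variables
  have hE : MeasurableSet (Tmap ⁻¹' A) := measurable_Tmap hA
  have hderiv : ∀ x ∈ U, HasFDerivWithinAt Tinv (D x) U x :=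
    fun x _ => (hasFDerivAt_Tinv x).hasFDerivWithinAt
  have cov := lintegral_image_eq_lintegral_abs_det_fderiv_mul volume measurableSet_U
    hderiv injOn_Tinv
    ((Tmap ⁻¹' A).indicator fun p : ℝ × ℝ => gammaPDF a 1 p.1 * gammaPDF b 1 p.2)
  rw [image_Tinv] at cov
  have lhs_eq : ∫⁻ p in (Tmap ⁻¹' A) ∩ S, gammaPDF a 1 p.1 * gammaPDF b 1 p.2
      = ∫⁻ p in S,
          ((Tmap ⁻¹' A).indicator fun p : ℝ × ℝ => gammaPDF a 1 p.1 * gammaPDF b 1 p.2) p := by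
    rw [← lintegral_indicator (hE.inter measurableSet_S) _,
      ← lintegral_indicator measurableSet_S _, Set.indicator_indicator, Set.inter_comm]
  rw [lhs_eq, cov]
  have rhs_eq : ∫⁻ p in A ∩ U, ENNReal.ofReal (betaPDFReal' a b p.1) * gammaPDF (a + b) 1 p.2
      = ∫⁻ p in U,
          (A.indicator fun p : ℝ × ℝ =>
            ENNReal.ofReal (betaPDFReal' a b p.1) * gammaPDF (a + b) 1 p.2) p := by
    rw [← lintegral_indicator (hA.inter measurableSet_U) _,
      ← lintegral_indicator measurableSet_U _, Set.indicator_indicator, Set.inter_comm]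
  rw [rhs_eq]
  apply setLIntegral_congr_fun measurableSet_U
  intro p hp
  beta_reduce
  have hTp : Tmap (Tinv p) = p := Tmap_Tinv hp
  obtain ⟨⟨hu0, hu1⟩, hs⟩ := hp
  by_cases hpA : p ∈ A
  · have hmem : Tinv p ∈ Tmap ⁻¹' A := by rw [Set.mem_preimage, hTp]; exact hpA
    rw [Set.indicator_of_mem hmem, Set.indicator_of_mem hpA, det_D]
    exact density_eq ha hb hu0 hu1 hs
  · have hmem : Tinv p ∉ Tmap ⁻¹' A := by rw [Set.mem_preimage, hTp]; exact hpA
    rw [Set.indicator_of_notMem hmem, Set.indicator_of_notMem hpA, mul_zero]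

end GammaRatioBetaAux

open GammaRatioBetaAux in
/-- if `X ∼ Gamma(a,1)` and `Y ∼ Gamma(b,1)` are independent, then
`X/(X+Y) ∼ Beta(a,b)`, `X/(X+Y)` is independent of `X+Y`, and `X+Y ∼ Gamma(a+b,1)`. -/
theorem gamma_ratio_beta
    {Ω : Type*} [MeasurableSpace Ω] (P : Measure Ω) [IsProbabilityMeasure P]
    (a b : ℝ) (ha : 0 < a) (hb : 0 < b)
    (X Y : Ω → ℝ) (hX : Measurable X) (hY : Measurable Y)
    (hXY : IndepFun X Y P)
    (hXgamma : Measure.map X P = gammaMeasure a 1)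
    (hYgamma : Measure.map Y P = gammaMeasure b 1) :
    Measure.map (fun ω => X ω / (X ω + Y ω)) P = betaMeasure' a b ∧
    IndepFun (fun ω => X ω / (X ω + Y ω)) (fun ω => X ω + Y ω) P ∧
    Measure.map (fun ω => X ω + Y ω) P = gammaMeasure (a + b) 1 := by
  haveI hprob_a : IsProbabilityMeasure (gammaMeasure a 1) := isProbabilityMeasure_gammaMeasure ha one_pos
  haveI hprob_b : IsProbabilityMeasure (gammaMeasure b 1) := isProbabilityMeasure_gammaMeasure hb one_pos
  haveI hprob_ab : IsProbabilityMeasure (gammaMeasure (a + b) 1) :=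
    isProbabilityMeasure_gammaMeasure (by linarith) one_pos
  have hgmeas : ∀ c : ℝ, Measurable (gammaPDF c 1) := fun c =>
    (measurable_gammaPDFReal c 1).ennreal_ofReal
  have hbmeas : Measurable fun t => ENNReal.ofReal (betaPDFReal' a b t) :=
    (GammaRatioBetaAux.measurable_betaPDFReal a b).ennreal_ofReal
  haveI iga : SigmaFinite ((volume : Measure ℝ).withDensity (gammaPDF a 1)) := by
    show SigmaFinite (gammaMeasure a 1); infer_instance
  haveI igb : SigmaFinite ((volume : Measure ℝ).withDensity (gammaPDF b 1)) := by
    show SigmaFinite (gammaMeasure b 1); infer_instance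
  haveI igab : SigmaFinite ((volume : Measure ℝ).withDensity (gammaPDF (a + b) 1)) := by
    show SigmaFinite (gammaMeasure (a + b) 1); infer_instance
  have hjoint : (gammaMeasure a 1).prod (gammaMeasure b 1)
      = (volume : Measure (ℝ × ℝ)).withDensity
          (fun p => gammaPDF a 1 p.1 * gammaPDF b 1 p.2) :=
    GammaRatioBetaAux.prod_withDensity (hgmeas a) (hgmeas b)
  have hpush : Measure.map Tmap ((gammaMeasure a 1).prod (gammaMeasure b 1))
      = (volume : Measure (ℝ × ℝ)).withDensity
          (fun p => ENNReal.ofReal (betaPDFReal' a b p.1) * gammaPDF (a + b) 1 p.2) := by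
    rw [hjoint]; exact map_Tmap ha hb
  haveI hprob_tp : IsProbabilityMeasure ((volume : Measure (ℝ × ℝ)).withDensity
      (fun p => ENNReal.ofReal (betaPDFReal' a b p.1) * gammaPDF (a + b) 1 p.2)) := by
    rw [← hpush]
    exact Measure.isProbabilityMeasure_map measurable_Tmap.aemeasurable
  have hbeta1 : ∫⁻ t, ENNReal.ofReal (betaPDFReal' a b t) = 1 := by
    have h1 := hprob_tp.measure_univ
    rw [withDensity_apply _ MeasurableSet.univ, Measure.restrict_univ,
      Measure.volume_eq_prod,
      lintegral_prod_mul hbmeas.aemeasurable (hgmeas (a + b)).aemeasurable,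
      lintegral_gammaPDF_eq_one (by linarith : (0:ℝ) < a + b) one_pos, mul_one] at h1
    exact h1
  haveI hprob_beta : IsProbabilityMeasure (betaMeasure' a b) := by
    constructor
    rw [betaMeasure', withDensity_apply _ MeasurableSet.univ, Measure.restrict_univ]
    exact hbeta1
  haveI ibeta : SigmaFinite ((volume : Measure ℝ).withDensity
      (fun t => ENNReal.ofReal (betaPDFReal' a b t))) := by
    show SigmaFinite (betaMeasure' a b); infer_instance
  have hfinal : (volume : Measure (ℝ × ℝ)).withDensity
        (fun p => ENNReal.ofReal (betaPDFReal' a b p.1) * gammaPDF (a + b) 1 p.2)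
      = (betaMeasure' a b).prod (gammaMeasure (a + b) 1) :=
    (GammaRatioBetaAux.prod_withDensity hbmeas (hgmeas (a + b))).symm
  have hpairmeas : Measurable (fun ω => (X ω, Y ω)) := hX.prodMk hY
  have hpair : Measure.map (fun ω => (X ω, Y ω)) P
      = (gammaMeasure a 1).prod (gammaMeasure b 1) := by
    rw [← hXgamma, ← hYgamma]
    exact (indepFun_iff_map_prod_eq_prod_map_map hX.aemeasurable hY.aemeasurable).mp hXY
  have hmap2 : Measure.map (fun ω => (X ω / (X ω + Y ω), X ω + Y ω)) P
      = (betaMeasure' a b).prod (gammaMeasure (a + b) 1) := by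
    have hcomp : (fun ω => (X ω / (X ω + Y ω), X ω + Y ω))
        = Tmap ∘ (fun ω => (X ω, Y ω)) := rfl
    rw [hcomp, ← Measure.map_map measurable_Tmap hpairmeas, hpair, hpush, hfinal]
  have hratio_meas : Measurable (fun ω => X ω / (X ω + Y ω)) := hX.div (hX.add hY)
  have hsum_meas : Measurable (fun ω => X ω + Y ω) := hX.add hY
  have hr_pair_meas : Measurable (fun ω => (X ω / (X ω + Y ω), X ω + Y ω)) :=
    hratio_meas.prodMk hsum_meas
  have hratio : Measure.map (fun ω => X ω / (X ω + Y ω)) P = betaMeasure' a b := by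
    have hcomp : (fun ω => X ω / (X ω + Y ω))
        = Prod.fst ∘ (fun ω => (X ω / (X ω + Y ω), X ω + Y ω)) := rfl
    rw [hcomp, ← Measure.map_map measurable_fst hr_pair_meas, hmap2,
      Measure.map_fst_prod, measure_univ, one_smul]
  have hsum : Measure.map (fun ω => X ω + Y ω) P = gammaMeasure (a + b) 1 := by
    have hcomp : (fun ω => X ω + Y ω)
        = Prod.snd ∘ (fun ω => (X ω / (X ω + Y ω), X ω + Y ω)) := rfl
    rw [hcomp, ← Measure.map_map measurable_snd hr_pair_meas, hmap2,
      Measure.map_snd_prod, measure_univ, one_smul]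
  refine ⟨hratio, ?_, hsum⟩
  rw [indepFun_iff_map_prod_eq_prod_map_map hratio_meas.aemeasurable hsum_meas.aemeasurable,
    hmap2, hratio, hsum]
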